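/- arXiv:2501.13358 — 2 statements merged into one kernel-verified Lean document; each statement's English description precedes it below -/
import Mathlib

section
/- There exist constants C > 0 and k ∈ ℕ such that for every integer T ≥ 2 there exists a single randomized bidding policy π over T rounds such that for every sequence (v_t, m_t)_{t=1}^T ⊂ [0,1]^2, the expected dynamic regret of π on this sequence is at most C · (L_T + 1) · (1 + log T)^k, where L_T = Σ_{t=2}^T 𝟙[m_t ≠ m_{t−1}] is the number of switches of the opponents' highest bid sequence. -/
/-- First-price auction reward: `r(b; v, m) = (v - b) · 1[b ≥ m]`. -/
noncomputable def fpaReward (b v m : ℝ) : ℝ := if m ≤ b then v - b else 0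

/-- A randomized bidding policy over `T` rounds: a probability space together with,
for each round `t`, a measurable map from (history of `(vₛ, mₛ)` for `s < t`, current
value `vₜ`, randomness `ω`) to a bid in `[0,1]`. Rounds are indexed `0, …, T-1`. -/
structure BidPolicy (T : ℕ) where
  Ω : Type
  [instMS : MeasurableSpace Ω]
  μ : MeasureTheory.Measure Ω
  isProb : MeasureTheory.IsProbabilityMeasure μ
  bid : (t : ℕ) → (Fin t → ℝ × ℝ) → ℝ → Ω → ℝ
  bid_mem : ∀ t h v ω, bid t h v ω ∈ Set.Icc (0:ℝ) 1
  bid_measurable : ∀ t, Measurable fun p : (Fin t → ℝ × ℝ) × ℝ × Ω => bid t p.1 p.2.1 p.2.2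

attribute [instance] BidPolicy.instMS

/-- The bid of the policy at round `t` on the sequence `(v, m)`, given randomness `ω`. -/
noncomputable def BidPolicy.bids {T : ℕ} (π : BidPolicy T) (v m : ℕ → ℝ) (t : ℕ)
    (ω : π.Ω) : ℝ :=
  π.bid t (fun s : Fin t => (v s, m s)) (v t) ω

/-- Expected dynamic regret of a policy on the sequence `(v, m)` over `T` rounds. -/
noncomputable def BidPolicy.expRegret {T : ℕ} (π : BidPolicy T) (v m : ℕ → ℝ) : ℝ :=
  ∫ ω, (∑ t ∈ Finset.range T,
    (max (v t - m t) 0 - fpaReward (π.bids v m t ω) (v t) (m t))) ∂π.μ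

/-- Temporal variation `Σ_{t=2}^T |m_t - m_{t-1}|` (rounds indexed `0, …, T-1`). -/
noncomputable def totalVariation (m : ℕ → ℝ) (T : ℕ) : ℝ :=
  ∑ t ∈ Finset.range (T - 1), |m (t + 1) - m t|

/-- Number of switches `Σ_{t=2}^T 1[m_t ≠ m_{t-1}]` (rounds indexed `0, …, T-1`). -/
noncomputable def numSwitches (m : ℕ → ℝ) (T : ℕ) : ℝ :=
  ∑ t ∈ Finset.range (T - 1), if m (t + 1) ≠ m t then 1 else 0

/-- Deterministic bidding rule: at round `0` bid `0`; afterwards, bid the previous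
opponents' highest bid (clamped to `[0,1]`) if it does not exceed the current value,
and `0` otherwise. -/
noncomputable def myBid : (t : ℕ) → (Fin t → ℝ × ℝ) → ℝ → Unit → ℝ
  | 0, _, _, _ => 0
  | (n+1), h, v, _ =>
      if min 1 (max 0 (h (Fin.last n)).2) ≤ v then min 1 (max 0 (h (Fin.last n)).2) else 0

lemma myBid_mem : ∀ t h v ω, myBid t h v ω ∈ Set.Icc (0:ℝ) 1 := by
  intro t h v ω
  cases t with
  | zero => simp [myBid]
  | succ n =>
    simp only [myBid]
    split
    · exact ⟨le_min zero_le_one (le_max_left _ _), min_le_left _ _⟩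
    · simp

lemma myBid_measurable (t : ℕ) :
    Measurable fun p : (Fin t → ℝ × ℝ) × ℝ × Unit => myBid t p.1 p.2.1 p.2.2 := by
  cases t with
  | zero => simp only [myBid]; exact measurable_const
  | succ n =>
    have hc : Measurable fun p : (Fin (n+1) → ℝ × ℝ) × ℝ × Unit =>
        min 1 (max 0 (p.1 (Fin.last n)).2) :=
      measurable_const.min (measurable_const.max
        (((measurable_pi_apply (Fin.last n)).comp measurable_fst).snd))
    have hv : Measurable fun p : (Fin (n+1) → ℝ × ℝ) × ℝ × Unit => p.2.1 :=
      measurable_snd.fst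
    exact Measurable.ite (measurableSet_le hc hv) hc measurable_const

/-- The deterministic policy packaged as a `BidPolicy`. -/
noncomputable def myPolicy (T : ℕ) : BidPolicy T where
  Ω := Unit
  instMS := inferInstance
  μ := MeasureTheory.Measure.dirac ()
  isProb := inferInstance
  bid := myBid
  bid_mem := myBid_mem
  bid_measurable := myBid_measurable

lemma regret_le_two (b v m : ℝ) (hb : b ∈ Set.Icc (0:ℝ) 1) (hv : v ∈ Set.Icc (0:ℝ) 1)
    (hm : m ∈ Set.Icc (0:ℝ) 1) :
    max (v - m) 0 - fpaReward b v m ≤ 2 := by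
  obtain ⟨hb0, hb1⟩ := hb
  obtain ⟨hv0, hv1⟩ := hv
  obtain ⟨hm0, hm1⟩ := hm
  have h1 : max (v - m) 0 ≤ 1 := max_le (by linarith) zero_le_one
  unfold fpaReward
  split <;> linarith

lemma regret_zero (v m : ℝ) (hv : 0 ≤ v) (hm0 : 0 ≤ m) :
    max (v - m) 0 - fpaReward (if m ≤ v then m else 0) v m = 0 := by
  unfold fpaReward
  by_cases h : m ≤ v
  · simp [h, max_eq_left (by linarith : (0:ℝ) ≤ v - m)]
  · push_neg at h
    have hm0' : 0 < m := lt_of_le_of_lt hv h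
    rw [if_neg (not_le.mpr h), if_neg (not_le.mpr hm0'),
      max_eq_right (by linarith : v - m ≤ 0), sub_zero]

lemma myPolicy_bid_succ (T : ℕ) (v m : ℕ → ℝ) (t : ℕ) (hm : m t ∈ Set.Icc (0:ℝ) 1) :
    (myPolicy T).bids v m (t + 1) () = if m t ≤ v (t + 1) then m t else 0 := by
  obtain ⟨hm0, hm1⟩ := hm
  have hclamp : min 1 (max 0 (m t)) = m t := by
    rw [max_eq_right hm0, min_eq_right hm1]
  simp only [BidPolicy.bids, myPolicy, myBid, Fin.val_last, hclamp]

/-- Upper bound under the switching measure: there is a single policy whose expected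
dynamic regret on every sequence in `[0,1]²` is `O(L_T + 1)` up to polylogarithmic
factors in `T`, where `L_T` is the number of switches of the opponents' highest bids. -/
theorem adaptive_switching_upper_bound :
    ∃ C : ℝ, 0 < C ∧ ∃ k : ℕ, ∀ T : ℕ, 2 ≤ T → ∃ π : BidPolicy T,
      ∀ v m : ℕ → ℝ,
        (∀ t < T, v t ∈ Set.Icc (0:ℝ) 1) → (∀ t < T, m t ∈ Set.Icc (0:ℝ) 1) →
        π.expRegret v m ≤
          C * (numSwitches m T + 1) * (1 + Real.log T) ^ k := by
  refine ⟨2, two_pos, 0, fun T hT => ⟨myPolicy T, fun v m hv hm => ?_⟩⟩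
  set f : ℕ → ℝ := fun t =>
    max (v t - m t) 0 - fpaReward ((myPolicy T).bids v m t ()) (v t) (m t) with hf
  have hexp : (myPolicy T).expRegret v m = ∑ t ∈ Finset.range T, f t := by
    unfold BidPolicy.expRegret
    exact MeasureTheory.integral_dirac _ ()
  -- per-round bound
  have hle2 : ∀ t < T, f t ≤ 2 := fun t ht =>
    regret_le_two _ _ _ ((myPolicy T).bid_mem t _ _ ()) (hv t ht) (hm t ht)
  -- zero regret on non-switch rounds
  have hzero : ∀ t, t + 1 < T → m (t + 1) = m t → f (t + 1) = 0 := by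
    intro t ht heq
    have hb := myPolicy_bid_succ T v m t (hm t (by omega))
    rw [hf]
    simp only
    rw [hb, ← heq]
    exact regret_zero _ _ (hv (t + 1) ht).1 (hm (t + 1) ht).1
  -- split off round 0
  obtain ⟨n, rfl⟩ : ∃ n, T = n + 1 := ⟨T - 1, by omega⟩
  have hsum : ∑ t ∈ Finset.range (n + 1), f t
      = (∑ t ∈ Finset.range n, f (t + 1)) + f 0 := Finset.sum_range_succ' f n
  have hbound : ∑ t ∈ Finset.range n, f (t + 1)
      ≤ ∑ t ∈ Finset.range n, 2 * (if m (t + 1) ≠ m t then (1:ℝ) else 0) := by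
    refine Finset.sum_le_sum fun t ht => ?_
    have ht' : t + 1 < n + 1 := by
      have := Finset.mem_range.mp ht; omega
    by_cases h : m (t + 1) = m t
    · rw [hzero t ht' h]; simp [h]
    · rw [if_pos h, mul_one]; exact hle2 (t + 1) ht'
  have hL : numSwitches m (n + 1)
      = ∑ t ∈ Finset.range n, (if m (t + 1) ≠ m t then (1:ℝ) else 0) := by
    simp [numSwitches]
  rw [hexp, pow_zero, mul_one, hsum]
  have h0 : f 0 ≤ 2 := hle2 0 (by omega)
  rw [hL]
  rw [← Finset.mul_sum] at hbound
  linarith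
end

section
/- There exist constants C > 0 and k ∈ ℕ such that for every integer T ≥ 2 and all reals V > 0 and Vᵛ ≥ 0 there exists a randomized bidding policy π over T rounds (which may depend on V and Vᵛ, corresponding to restarting the Hedge algorithm every Δ_T = Θ((T/(V + Vᵛ))^{2/3}) rounds) such that for every sequence (v_t, m_t)_{t=1}^T ⊂ [0,1]^2 with Σ_{t=2}^T |m_t − m_{t−1}| ≤ V and Σ_{t=2}^T |v_t − v_{t−1}| ≤ Vᵛ, the expected dynamic regret of π on this sequence is at most C · max{T^{2/3}·(V + Vᵛ)^{1/3}, 1} · (1 + log T)^k. -/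
/-- The deterministic bid function: at round `t ≥ 1`, bid `min (v) (m_{t-1} + δ)`,
clamped to `[0,1]`; at round `0`, bid `0`. -/
noncomputable def bidFun (δ : ℝ) : (t : ℕ) → (Fin t → ℝ × ℝ) → ℝ → ℝ
  | 0, _, _ => 0
  | (s+1), h, v => max 0 (min 1 (min v ((h (Fin.last s)).2 + δ)))

/-- The deterministic policy as a `BidPolicy`. -/
noncomputable def detPolicy (T : ℕ) (δ : ℝ) : BidPolicy T where
  Ω := Unit
  instMS := inferInstance
  μ := MeasureTheory.Measure.dirac ()
  isProb := inferInstance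
  bid := fun t h v _ => bidFun δ t h v
  bid_mem := by
    intro t h v ω
    cases t with
    | zero => exact ⟨le_refl 0, zero_le_one⟩
    | succ s =>
      constructor
      · exact le_max_left _ _
      · exact max_le zero_le_one (min_le_left _ _)
  bid_measurable := by
    intro t
    cases t with
    | zero => exact measurable_const
    | succ s =>
      have h1 : Measurable fun p : (Fin (s+1) → ℝ × ℝ) × ℝ × Unit =>
          (p.1 (Fin.last s)).2 :=
        ((measurable_pi_apply (Fin.last s)).comp measurable_fst).snd
      have h2 : Measurable fun p : (Fin (s+1) → ℝ × ℝ) × ℝ × Unit => p.2.1 :=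
        measurable_fst.comp measurable_snd
      exact measurable_const.max (measurable_const.min
        (h2.min (h1.add measurable_const)))

lemma myRound_le_one (b v m : ℝ) (hb : 0 ≤ b) (hbv : b ≤ v) (hv1 : v ≤ 1) (hm0 : 0 ≤ m) :
    max (v - m) 0 - fpaReward b v m ≤ 1 := by
  have h1 : max (v - m) 0 ≤ 1 := max_le (by linarith) (by linarith)
  unfold fpaReward
  split_ifs <;> linarith

lemma myRound_le (δ v m m' : ℝ) (hδ : 0 < δ) (hv0 : 0 ≤ v) (hv1 : v ≤ 1)
    (hm0 : 0 ≤ m) (hm1 : m ≤ 1) (hm'0 : 0 ≤ m') :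
    max (v - m) 0 - fpaReward (max 0 (min 1 (min v (m' + δ)))) v m
      ≤ |m - m'| + δ + (if δ < m - m' then 1 else 0) := by
  have hb : max 0 (min 1 (min v (m' + δ))) = min v (m' + δ) := by
    have h0 : 0 ≤ min v (m' + δ) := le_min hv0 (by linarith)
    have h1 : min v (m' + δ) ≤ 1 := le_trans (min_le_left _ _) hv1
    rw [min_eq_right h1, max_eq_right h0]
  rw [hb]
  have hbv : min v (m' + δ) ≤ v := min_le_left _ _
  have hbm : min v (m' + δ) ≤ m' + δ := min_le_right _ _
  have habs : m' - m ≤ |m - m'| := by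
    rw [abs_sub_comm]; exact le_abs_self _
  have habs0 : (0:ℝ) ≤ |m - m'| := abs_nonneg _
  unfold fpaReward
  by_cases hw : m ≤ min v (m' + δ)
  · rw [if_pos hw]
    have hmax : max (v - m) 0 = v - m := max_eq_left (by linarith)
    rw [hmax]
    split_ifs <;> linarith
  · rw [if_neg hw]
    push_neg at hw
    by_cases hvm : v ≤ m
    · have hmax : max (v - m) 0 = 0 := max_eq_right (by linarith)
      rw [hmax]
      split_ifs <;> linarith
    · push_neg at hvm
      have hjump : δ < m - m' := by
        by_contra hc
        push_neg at hc
        exact absurd (le_min hvm.le (by linarith)) (not_le.mpr hw)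
      rw [if_pos hjump]
      have hmax : max (v - m) 0 ≤ 1 := max_le (by linarith) (by linarith)
      linarith

/-- Restarted-Hedge upper bound: for known `V > 0` and `Vᵛ ≥ 0` there is a policy
(restarting Hedge every `Θ((T/(V + Vᵛ))^{2/3})` rounds) whose expected dynamic regret
on every sequence in `[0,1]²` with `Σ |m_t - m_{t-1}| ≤ V` and `Σ |v_t - v_{t-1}| ≤ Vᵛ`
is `O(max {T^{2/3}·(V + Vᵛ)^{1/3}, 1})` up to polylogarithmic factors in `T`. -/
theorem restart_hedge_upper_bound :
    ∃ C : ℝ, 0 < C ∧ ∃ k : ℕ, ∀ T : ℕ, 2 ≤ T → ∀ V : ℝ, 0 < V → ∀ Vv : ℝ, 0 ≤ Vv →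
      ∃ π : BidPolicy T,
        ∀ v m : ℕ → ℝ,
          (∀ t < T, v t ∈ Set.Icc (0:ℝ) 1) → (∀ t < T, m t ∈ Set.Icc (0:ℝ) 1) →
          totalVariation m T ≤ V → totalVariation v T ≤ Vv →
          π.expRegret v m ≤
            C * max ((T : ℝ) ^ ((2:ℝ)/3) * (V + Vv) ^ ((1:ℝ)/3)) 1 *
              (1 + Real.log T) ^ k := by
  refine ⟨4, by norm_num, 0, ?_⟩
  intro T hT V hV Vv hVv
  have hT2 : (2:ℝ) ≤ (T:ℝ) := by exact_mod_cast hT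
  have hTpos : (0:ℝ) < T := by linarith
  set s : ℝ := Real.sqrt (V * T) with hsdef
  have hs : 0 < s := Real.sqrt_pos.mpr (by positivity)
  have hs2 : s * s = V * T := Real.mul_self_sqrt (by positivity)
  set δ : ℝ := s / T with hδdef
  have hδ : 0 < δ := div_pos hs hTpos
  refine ⟨detPolicy T δ, ?_⟩
  intro v m hv hm hVar _
  -- the regret at each round, as a function of the round index
  set g : ℕ → ℝ := fun t =>
    max (v t - m t) 0 - fpaReward ((detPolicy T δ).bids v m t ()) (v t) (m t) with hgdef
  have hreg : (detPolicy T δ).expRegret v m = ∑ t ∈ Finset.range T, g t := by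
    exact MeasureTheory.integral_dirac
      (fun ω : Unit => ∑ t ∈ Finset.range T,
        (max (v t - m t) 0 - fpaReward ((detPolicy T δ).bids v m t ω) (v t) (m t))) ()
  -- explicit form of the bids
  have hbid0 : (detPolicy T δ).bids v m 0 () = 0 := rfl
  have hbidS : ∀ i : ℕ, (detPolicy T δ).bids v m (i+1) ()
      = max 0 (min 1 (min (v (i+1)) (m i + δ))) := fun i => rfl
  -- per-round bounds
  have hg1 : ∀ t < T, g t ≤ 1 := by
    intro t ht
    cases t with
    | zero =>
      rw [hgdef]
      simp only [hbid0]
      exact myRound_le_one 0 (v 0) (m 0) le_rfl (hv 0 ht).1 (hv 0 ht).2 (hm 0 ht).1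
    | succ i =>
      have hiT : i < T := lt_of_le_of_lt (Nat.le_succ i) ht
      rw [hgdef]
      simp only [hbidS]
      have hb : max 0 (min 1 (min (v (i+1)) (m i + δ))) = min (v (i+1)) (m i + δ) := by
        have h0 : 0 ≤ min (v (i+1)) (m i + δ) :=
          le_min (hv (i+1) ht).1 (by linarith [(hm i hiT).1])
        have h1 : min (v (i+1)) (m i + δ) ≤ 1 :=
          le_trans (min_le_left _ _) (hv (i+1) ht).2
        rw [min_eq_right h1, max_eq_right h0]
      rw [hb]
      exact myRound_le_one _ _ _
        (le_min (hv (i+1) ht).1 (by linarith [(hm i hiT).1]))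
        (min_le_left _ _) (hv (i+1) ht).2 (hm (i+1) ht).1
  have hgS : ∀ i ∈ Finset.range (T - 1),
      g (i+1) ≤ |m (i+1) - m i| + δ + (if δ < m (i+1) - m i then 1 else 0) := by
    intro i hi
    rw [Finset.mem_range] at hi
    have hiT : i < T := lt_of_lt_of_le hi (Nat.sub_le T 1)
    have hi1T : i + 1 < T := by omega
    rw [hgdef]
    simp only [hbidS]
    exact myRound_le δ (v (i+1)) (m (i+1)) (m i) hδ
      (hv (i+1) hi1T).1 (hv (i+1) hi1T).2 (hm (i+1) hi1T).1 (hm (i+1) hi1T).2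
      (hm i hiT).1
  -- number of big jumps bound
  have hind : (∑ i ∈ Finset.range (T-1), (if δ < m (i+1) - m i then (1:ℝ) else 0)) ≤ V / δ := by
    have step : ∀ i ∈ Finset.range (T-1),
        (if δ < m (i+1) - m i then (1:ℝ) else 0) ≤ |m (i+1) - m i| / δ := by
      intro i _
      split_ifs with h
      · rw [le_div_iff₀ hδ, one_mul]
        exact le_trans h.le (le_abs_self _)
      · positivity
    calc (∑ i ∈ Finset.range (T-1), (if δ < m (i+1) - m i then (1:ℝ) else 0))
        ≤ ∑ i ∈ Finset.range (T-1), |m (i+1) - m i| / δ := Finset.sum_le_sum step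
      _ = (∑ i ∈ Finset.range (T-1), |m (i+1) - m i|) / δ := by
          rw [Finset.sum_div]
      _ ≤ V / δ := div_le_div_of_nonneg_right hVar hδ.le
  -- sum bound
  have hT1 : T - 1 + 1 = T := by omega
  have hsum : (∑ t ∈ Finset.range T, g t) ≤ 1 + V + (T:ℝ) * δ + V / δ := by
    have h0 : g 0 ≤ 1 := hg1 0 (by omega)
    have hsplit : (∑ t ∈ Finset.range T, g t)
        = (∑ i ∈ Finset.range (T-1), g (i+1)) + g 0 := by
      have h := Finset.sum_range_succ' g (T-1)
      rw [hT1] at h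
      exact h
    rw [hsplit]
    have h1 : (∑ i ∈ Finset.range (T-1), g (i+1))
        ≤ ∑ i ∈ Finset.range (T-1),
            (|m (i+1) - m i| + δ + (if δ < m (i+1) - m i then 1 else 0)) :=
      Finset.sum_le_sum hgS
    have h2 : (∑ i ∈ Finset.range (T-1),
            (|m (i+1) - m i| + δ + (if δ < m (i+1) - m i then 1 else 0)))
        = totalVariation m T + ((T-1 : ℕ):ℝ) * δ
          + ∑ i ∈ Finset.range (T-1), (if δ < m (i+1) - m i then (1:ℝ) else 0) := by
      rw [Finset.sum_add_distrib, Finset.sum_add_distrib, totalVariation,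
        Finset.sum_const, nsmul_eq_mul, Finset.card_range]
    have hcast : ((T-1 : ℕ):ℝ) ≤ (T:ℝ) := by
      exact_mod_cast Nat.sub_le T 1
    have hTδ : ((T-1 : ℕ):ℝ) * δ ≤ (T:ℝ) * δ :=
      mul_le_mul_of_nonneg_right hcast hδ.le
    calc (∑ i ∈ Finset.range (T-1), g (i+1)) + g 0
        ≤ (∑ i ∈ Finset.range (T-1),
            (|m (i+1) - m i| + δ + (if δ < m (i+1) - m i then 1 else 0))) + 1 :=
          add_le_add h1 h0
      _ = (totalVariation m T + ((T-1 : ℕ):ℝ) * δ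
            + ∑ i ∈ Finset.range (T-1), (if δ < m (i+1) - m i then (1:ℝ) else 0)) + 1 := by
          rw [h2]
      _ ≤ (V + (T:ℝ) * δ + V / δ) + 1 := by
          have h3 := add_le_add (add_le_add hVar hTδ) hind
          linarith
      _ = 1 + V + (T:ℝ) * δ + V / δ := by ring
  have hTδ' : (T:ℝ) * δ = s := by
    rw [hδdef]; field_simp
  have hVδ : V / δ = s := by
    rw [hδdef, div_div_eq_mul_div, ← hs2, mul_comm]
    field_simp
  have hsum2 : (∑ t ∈ Finset.range T, g t) ≤ 1 + V + s + s := by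
    rw [hTδ', hVδ] at hsum; linarith
  have hsumT : (∑ t ∈ Finset.range T, g t) ≤ (T:ℝ) := by
    calc (∑ t ∈ Finset.range T, g t) ≤ ∑ t ∈ Finset.range T, (1:ℝ) :=
          Finset.sum_le_sum (fun t ht => hg1 t (Finset.mem_range.mp ht))
      _ = (T:ℝ) := by simp
  -- final arithmetic
  set X : ℝ := (T:ℝ) ^ ((2:ℝ)/3) * (V + Vv) ^ ((1:ℝ)/3) with hXdef
  set M : ℝ := max X 1 with hMdef
  have hM1 : (1:ℝ) ≤ M := le_max_right _ _
  have hMX : X ≤ M := le_max_left _ _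
  rw [hreg, pow_zero, mul_one]
  have hVVv : V ≤ V + Vv := by linarith
  by_cases hcase : V ≤ (T:ℝ)
  · -- moderate variation: use 1 + V + 2s ≤ 4M
    have hVs : V ≤ s := by nlinarith
    have hY : s ≤ (T:ℝ) ^ ((2:ℝ)/3) * V ^ ((1:ℝ)/3) := by
      set Y : ℝ := (T:ℝ) ^ ((2:ℝ)/3) * V ^ ((1:ℝ)/3) with hYdef
      have hYpos : 0 < Y := by
        apply mul_pos (Real.rpow_pos_of_pos hTpos _) (Real.rpow_pos_of_pos hV _)
      have hYY : Y * Y = (T:ℝ) ^ ((4:ℝ)/3) * V ^ ((2:ℝ)/3) := by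
        rw [hYdef]
        rw [show ((T:ℝ) ^ ((2:ℝ)/3) * V ^ ((1:ℝ)/3)) * ((T:ℝ) ^ ((2:ℝ)/3) * V ^ ((1:ℝ)/3))
            = ((T:ℝ) ^ ((2:ℝ)/3) * (T:ℝ) ^ ((2:ℝ)/3)) * (V ^ ((1:ℝ)/3) * V ^ ((1:ℝ)/3))
          from by ring]
        rw [← Real.rpow_add hTpos, ← Real.rpow_add hV]
        norm_num
      have hcore : V * (T:ℝ) ≤ (T:ℝ) ^ ((4:ℝ)/3) * V ^ ((2:ℝ)/3) := by
        have hT43 : (T:ℝ) ^ ((4:ℝ)/3) = (T:ℝ) * (T:ℝ) ^ ((1:ℝ)/3) := by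
          rw [show ((4:ℝ)/3) = 1 + (1:ℝ)/3 by norm_num, Real.rpow_add hTpos,
            Real.rpow_one]
        have hTV : V * (T:ℝ) = (T:ℝ) * V ^ ((2:ℝ)/3) * V ^ ((1:ℝ)/3) := by
          rw [mul_assoc, ← Real.rpow_add hV,
            show (2:ℝ)/3 + (1:ℝ)/3 = 1 by norm_num, Real.rpow_one]
          ring
        calc V * (T:ℝ) = (T:ℝ) * V ^ ((2:ℝ)/3) * V ^ ((1:ℝ)/3) := hTV
          _ ≤ (T:ℝ) * V ^ ((2:ℝ)/3) * (T:ℝ) ^ ((1:ℝ)/3) := by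
              apply mul_le_mul_of_nonneg_left
                (Real.rpow_le_rpow hV.le hcase (by norm_num))
              positivity
          _ = (T:ℝ) ^ ((4:ℝ)/3) * V ^ ((2:ℝ)/3) := by rw [hT43]; ring
      nlinarith
    have hYX : (T:ℝ) ^ ((2:ℝ)/3) * V ^ ((1:ℝ)/3) ≤ X := by
      rw [hXdef]
      apply mul_le_mul_of_nonneg_left
        (Real.rpow_le_rpow hV.le hVVv (by norm_num))
      positivity
    have hsX : s ≤ M := le_trans hY (le_trans hYX hMX)
    linarith
  · -- huge variation: use the trivial bound T ≤ X
    push_neg at hcase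
    have hTX : (T:ℝ) ≤ X := by
      have h1 : (T:ℝ) ^ ((2:ℝ)/3) * (T:ℝ) ^ ((1:ℝ)/3) = (T:ℝ) := by
        rw [← Real.rpow_add hTpos,
          show (2:ℝ)/3 + (1:ℝ)/3 = 1 by norm_num, Real.rpow_one]
      calc (T:ℝ) = (T:ℝ) ^ ((2:ℝ)/3) * (T:ℝ) ^ ((1:ℝ)/3) := h1.symm
        _ ≤ (T:ℝ) ^ ((2:ℝ)/3) * (V + Vv) ^ ((1:ℝ)/3) := by
            apply mul_le_mul_of_nonneg_left
              (Real.rpow_le_rpow hTpos.le (by linarith) (by norm_num))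
            positivity
        _ = X := by rw [hXdef]
    linarith
end
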